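/- If ψ_n · ψ_{N-1-n} ≠ 1 for all n ∈ {0, ..., N/2 - 1}, then the inverse of C = I_N + J_N Ψ is given in closed form by C^{-1} = Ψ̃ (I_N - J_N Ψ), where Ψ̃ is the diagonal matrix with diagonal entries Ψ̃(n) = 1/(1 - ψ_n ψ_{N-1-n}) for n = 0, ..., N-1. -/

import Mathlib

open Matrix

/-- The `N × N` exchange (counter-identity) matrix: `(J_N)_{ij} = 1` if `i + j = N - 1`,
and `0` otherwise. -/
noncomputable def exchMat (N : ℕ) : Matrix (Fin N) (Fin N) ℝ :=
  Matrix.of fun i j => if (i : ℕ) + (j : ℕ) = N - 1 then (1 : ℝ) else 0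

lemma exchMat_apply (N : ℕ) (i j : Fin N) :
    exchMat N i j = if j = i.rev then 1 else 0 := by
  have h1 := i.isLt
  have h2 := j.isLt
  have : ((i : ℕ) + (j : ℕ) = N - 1) ↔ j = i.rev := by
    rw [Fin.ext_iff, Fin.val_rev]; omega
  simp [exchMat, this]

lemma exchMat_mul_diag {N : ℕ} (f : Fin N → ℝ) :
    exchMat N * Matrix.diagonal f = Matrix.diagonal (fun n => f n.rev) * exchMat N := by
  ext i j
  rw [Matrix.mul_diagonal, Matrix.diagonal_mul, exchMat_apply]
  by_cases h : j = i.rev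
  · subst h; simp [Fin.rev_rev]
  · simp [h]

lemma exchMat_mul_exchMat (N : ℕ) : exchMat N * exchMat N = 1 := by
  ext i j
  rw [Matrix.mul_apply]
  simp only [exchMat_apply, ite_mul, one_mul, zero_mul]
  rw [Finset.sum_ite_eq' (Finset.univ) i.rev (fun k => if j = k.rev then (1:ℝ) else 0)]
  simp [Fin.rev_rev, Matrix.one_apply, eq_comm]

/-- If `ψ_n · ψ_{N-1-n} ≠ 1` for all `n ∈ {0, …, N/2 - 1}`, then the inverse of
`C = I_N + J_N Ψ` is `C⁻¹ = Ψ̃ (I_N - J_N Ψ)` where `Ψ̃ = diag(1/(1 - ψ_n ψ_{N-1-n}))`. -/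
theorem stmt2 (N : ℕ) (hN : 0 < N) (hNe : Even N) (ψ : Fin N → ℝ)
    (hψ : ∀ n : Fin N, (n : ℕ) < N / 2 → ψ n * ψ n.rev ≠ 1) :
    ((1 : Matrix (Fin N) (Fin N) ℝ) + exchMat N * Matrix.diagonal ψ)⁻¹ =
      Matrix.diagonal (fun n => 1 / (1 - ψ n * ψ n.rev)) *
        ((1 : Matrix (Fin N) (Fin N) ℝ) - exchMat N * Matrix.diagonal ψ) := by
  have hall : ∀ n : Fin N, ψ n * ψ n.rev ≠ 1 := by
    intro n
    by_cases h : (n : ℕ) < N / 2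
    · exact hψ n h
    · have hr : ((n.rev : ℕ)) < N / 2 := by
        have h1 := n.isLt
        obtain ⟨k, hk⟩ := hNe
        simp only [Fin.val_rev]
        omega
      have := hψ n.rev hr
      rw [Fin.rev_rev] at this
      rw [mul_comm]
      exact this
  have hnz : ∀ n : Fin N, 1 - ψ n * ψ n.rev ≠ 0 := fun n => sub_ne_zero.mpr (Ne.symm (hall n))
  apply Matrix.inv_eq_right_inv
  set J := exchMat N with hJdef
  set D := Matrix.diagonal ψ with hDdef
  set T := Matrix.diagonal (fun n : Fin N => 1 / (1 - ψ n * ψ n.rev)) with hTdef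
  set G := Matrix.diagonal (fun n : Fin N => ψ n.rev) with hGdef
  have hJD : J * D = G * J := exchMat_mul_diag ψ
  have hrr : (fun n : Fin N => ψ n.rev.rev) = ψ := funext fun n => by rw [Fin.rev_rev]
  have hJG : J * G = D * J := by
    rw [hGdef, exchMat_mul_diag, hDdef, hrr]
  have hTrev : (fun n : Fin N => 1 / (1 - ψ n.rev * ψ n.rev.rev))
      = (fun n : Fin N => 1 / (1 - ψ n * ψ n.rev)) :=
    funext fun n => by rw [Fin.rev_rev, mul_comm]
  have hJT : J * T = T * J := by
    rw [hTdef, exchMat_mul_diag, hTrev]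
  have hGT : G * T = T * G := by
    rw [hGdef, hTdef, Matrix.diagonal_mul_diagonal, Matrix.diagonal_mul_diagonal]
    exact congrArg _ (funext fun n => mul_comm _ _)
  have hJDJD : (J * D) * (J * D) = Matrix.diagonal (fun n => ψ n.rev * ψ n) := by
    calc (J * D) * (J * D) = G * (J * G) * J := by rw [hJD]; noncomm_ring
    _ = G * D * (J * J) := by rw [hJG]; noncomm_ring
    _ = G * D := by rw [hJdef, exchMat_mul_exchMat]; rw [mul_one]
    _ = Matrix.diagonal (fun n => ψ n.rev * ψ n) := by
        rw [hGdef, hDdef, Matrix.diagonal_mul_diagonal]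
  have key : J * D * T = T * (J * D) := by
    calc J * D * T = G * (J * T) := by rw [hJD]; noncomm_ring
    _ = (G * T) * J := by rw [hJT]; noncomm_ring
    _ = T * (G * J) := by rw [hGT]; noncomm_ring
    _ = T * (J * D) := by rw [hJD]
  have expand : (1 + J * D) * (T * (1 - J * D))
      = T * (1 - J * D) + (J * D * T) * (1 - J * D) := by noncomm_ring
  rw [expand, key]
  have step2 : T * (1 - J * D) + (T * (J * D)) * (1 - J * D)
      = T * (1 - (J * D) * (J * D)) := by noncomm_ring
  rw [step2, hJDJD, hTdef]
  ext i j
  rw [Matrix.diagonal_mul, Matrix.sub_apply, Matrix.one_apply, Matrix.diagonal_apply]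
  by_cases h : i = j
  · subst h
    simp only [if_pos rfl]
    field_simp [hnz i]
    simp
  · simp [h]
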